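/- Let d ≥ 1 and l_1,…,l_d ≥ 1 be integers. Then for every integer N ≥ 0, one has in ℚ: ∑_{0 ≤ n_1 < n_2 < ⋯ < n_d < N} n_1^{l_1}·n_2^{l_2}⋯n_d^{l_d} = ∑ over all tuples (k_1,…,k_d) with 1 ≤ k_1 ≤ l_1+1, 1 ≤ k_2 ≤ k_1+l_2+1, …, 1 ≤ k_d ≤ k_{d−1}+l_d+1, of 𝔹_{k_1}^{l_1} · 𝔹_{k_2}^{k_1+l_2} · 𝔹_{k_3}^{k_2+l_3} ⋯ 𝔹_{k_d}^{k_{d−1}+l_d} · N^{k_d}. In particular the left-hand side is a polynomial function of N of degree at most l_1+⋯+l_d+d with zero constant coefficient. -/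

import Mathlib

open Finset

/-- The Faulhaber coefficient `𝔹_u^l = (1/(l+1))·C(l+1,u)·B_{l+1−u} ∈ ℚ`, where `B_n` is the
`n`-th Bernoulli number in the convention `B_1 = −1/2`, so that
`∑_{n=0}^{N−1} n^l = ∑_{u=1}^{l+1} 𝔹_u^l·N^u`. -/
noncomputable def faulhaberB (u l : ℕ) : ℚ :=
  (1 / ((l : ℚ) + 1)) * (Nat.choose (l + 1) u : ℚ) * bernoulli (l + 1 - u)


lemma faulhaber_sum (k N : ℕ) :
    ∑ n ∈ range N, (n : ℚ) ^ k = ∑ u ∈ Icc 1 (k + 1), faulhaberB u k * (N : ℚ) ^ u := by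
  rw [sum_range_pow]
  refine Finset.sum_nbij' (fun i => k + 1 - i) (fun u => k + 1 - u) ?_ ?_ ?_ ?_ ?_
  · intro i hi; simp only [mem_range] at hi; simp only [mem_Icc]; omega
  · intro u hu; simp only [mem_Icc] at hu; simp only [mem_range]; omega
  · intro i hi; simp only [mem_range] at hi; omega
  · intro u hu; simp only [mem_Icc] at hu; omega
  · intro i hi
    simp only [mem_range] at hi
    unfold faulhaberB
    rw [show k + 1 - (k + 1 - i) = i by omega, Nat.choose_symm (by omega : i ≤ k + 1)]
    ring

noncomputable def Ts : ℕ → List ℕ → ℕ → ℚ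
  | k, [], N => (N : ℚ) ^ k
  | k, l :: ls, N => ∑ u ∈ Icc 1 (k + l + 1), faulhaberB u (k + l) * Ts u ls N

noncomputable def Hs : List ℕ → ℕ → ℚ
  | [], _ => 1
  | l :: ls, N => ∑ n ∈ range N, Hs ls n * (n : ℚ) ^ l

lemma Ts_concat (ls : List ℕ) : ∀ (k l N : ℕ),
    Ts k (ls ++ [l]) N = ∑ n ∈ range N, (n : ℚ) ^ l * Ts k ls n := by
  induction ls with
  | nil =>
    intro k l N
    simp only [List.nil_append, Ts]
    rw [← faulhaber_sum (k + l) N]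
    exact Finset.sum_congr rfl fun n _ => by rw [← pow_add]; ring_nf
  | cons a ls ih =>
    intro k l N
    simp only [List.cons_append, Ts, List.append_eq]
    have : ∀ u, faulhaberB u (k + a) * Ts u (ls ++ [l]) N
        = ∑ n ∈ range N, faulhaberB u (k + a) * ((n:ℚ) ^ l * Ts u ls n) := fun u => by
      rw [ih u l N, Finset.mul_sum]
    rw [Finset.sum_congr rfl fun u _ => this u, Finset.sum_comm]
    exact Finset.sum_congr rfl fun n _ => by rw [Finset.mul_sum]; exact Finset.sum_congr rfl fun u _ => by ring

lemma Hs_reverse (ls : List ℕ) : ∀ N, Hs ls.reverse N = Ts 0 ls N := by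
  induction ls using List.reverseRecOn with
  | nil => intro N; simp [Hs, Ts]
  | append_singleton ls a ih =>
    intro N
    rw [List.reverse_append, List.reverse_singleton, List.singleton_append]
    show (∑ n ∈ range N, Hs ls.reverse n * (n:ℚ)^a) = _
    rw [Ts_concat]
    exact Finset.sum_congr rfl fun n _ => by rw [ih n]; ring

lemma lhs_eq : ∀ (d : ℕ) (l : Fin d → ℕ) (N : ℕ),
    (∑ n ∈ (Fintype.piFinset fun _ : Fin d => Finset.range N).filter
        (fun n => ∀ i j : Fin d, i < j → n i < n j),
      ∏ i, (n i : ℚ) ^ (l i)) = Hs (List.ofFn l).reverse N := by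
  intro d
  induction d with
  | zero =>
    intro l N
    simp [Hs, Finset.filter_true_of_mem]
  | succ d ih =>
    intro l N
    have hrev : (List.ofFn l).reverse
        = l (Fin.last d) :: (List.ofFn fun i : Fin d => l i.castSucc).reverse := by
      rw [List.ofFn_succ', List.concat_eq_append, List.reverse_append,
        List.reverse_singleton, List.singleton_append]
    rw [hrev]
    show _ = ∑ m ∈ range N, Hs (List.ofFn fun i : Fin d => l i.castSucc).reverse m
        * (m : ℚ) ^ (l (Fin.last d))
    have := Finset.sum_nbij'
      (s := ((Finset.range N).sigma (fun m =>
        (Fintype.piFinset fun _ : Fin d => Finset.range m).filter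
          (fun n => ∀ i j : Fin d, i < j → n i < n j))))
      (t := ((Fintype.piFinset fun _ : Fin (d+1) => Finset.range N).filter
          (fun n => ∀ i j : Fin (d+1), i < j → n i < n j)))
      (f := fun p => (∏ i : Fin d, (p.2 i : ℚ) ^ (l i.castSucc)) * (p.1 : ℚ) ^ (l (Fin.last d)))
      (g := fun n => ∏ i, (n i : ℚ) ^ (l i))
      (fun p => Fin.snoc p.2 p.1) (fun n => ⟨n (Fin.last d), Fin.init n⟩)
      ?_ ?_ ?_ ?_ ?_
    · rw [← this, Finset.sum_sigma]
      refine Finset.sum_congr rfl fun m _ => ?_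
      dsimp only
      rw [← Finset.sum_mul, ih (fun i => l i.castSucc) m]
    · intro p hp
      simp only [mem_sigma, mem_filter, Fintype.mem_piFinset, mem_range] at hp ⊢
      obtain ⟨hm, hcoord, hmono⟩ := hp
      refine ⟨fun i => ?_, fun i j hij => ?_⟩
      · refine Fin.lastCases ?_ (fun i' => ?_) i
        · rw [Fin.snoc_last]; exact hm
        · rw [Fin.snoc_castSucc]; exact lt_trans (hcoord i') hm
      · rcases Fin.eq_castSucc_or_eq_last j with ⟨j', rfl⟩ | rfl
        · rcases Fin.eq_castSucc_or_eq_last i with ⟨i', rfl⟩ | rfl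
          · rw [Fin.snoc_castSucc, Fin.snoc_castSucc]
            exact hmono i' j' (by exact_mod_cast hij)
          · exact absurd hij (by simp [Fin.lt_iff_val_lt_val])
        · rcases Fin.eq_castSucc_or_eq_last i with ⟨i', rfl⟩ | rfl
          · rw [Fin.snoc_castSucc, Fin.snoc_last]; exact hcoord i'
          · exact absurd hij (lt_irrefl _)
    · intro n hn
      simp only [mem_filter, Fintype.mem_piFinset, mem_range] at hn
      obtain ⟨hcoord, hmono⟩ := hn
      simp only [mem_sigma, mem_filter, Fintype.mem_piFinset, mem_range]
      refine ⟨hcoord _, fun i => ?_, fun i j hij => ?_⟩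
      · exact hmono _ _ (Fin.castSucc_lt_last i)
      · exact hmono _ _ (by exact_mod_cast hij)
    · intro p hp
      simp only [Fin.snoc_last, Fin.init_snoc]
    · intro n hn
      exact Fin.snoc_init_self n
    · intro p hp
      rw [Fin.prod_univ_castSucc]
      simp only [Fin.snoc_castSucc, Fin.snoc_last]

lemma cons_mk_eq (d : ℕ) (k₁ : ℕ) (K' : Fin (d + 1) → ℕ) (m : ℕ) (h : m < d + 2) :
    Fin.cons (α := fun _ => ℕ) k₁ K' ⟨m, h⟩
      = if m = 0 then k₁ else K' ⟨m - 1, by omega⟩ := by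
  match m with
  | 0 => rfl
  | m + 1 =>
    rw [if_neg (by omega)]
    exact Fin.cons_succ (α := fun _ => ℕ) k₁ K' ⟨m, (by omega : m < d + 1)⟩

noncomputable def RHSsum (d k₀ M N : ℕ) (l : Fin (d + 1) → ℕ) : ℚ :=
  ∑ K ∈ (Fintype.piFinset fun _ : Fin (d + 1) => Finset.Icc 1 M).filter
      (fun K => (∀ j : Fin (d + 1), 1 ≤ K j) ∧
        (∀ j : Fin (d + 1), (j : ℕ) = 0 → K j ≤ k₀ + l j + 1) ∧
        (∀ j₁ j₂ : Fin (d + 1), (j₁ : ℕ) + 1 = (j₂ : ℕ) → K j₂ ≤ K j₁ + l j₂ + 1)),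
    (∏ j : Fin (d + 1), faulhaberB (K j)
        ((if (j : ℕ) = 0 then k₀
          else K ⟨(j : ℕ) - 1, lt_of_le_of_lt (Nat.sub_le _ _) j.isLt⟩) + l j)) *
      (N : ℚ) ^ (K (Fin.last d))

lemma rhs_eq (d : ℕ) : ∀ (k₀ : ℕ) (l : Fin (d + 1) → ℕ) (M N : ℕ),
    k₀ + (∑ i, l i) + (d + 1) ≤ M →
    RHSsum d k₀ M N l = Ts k₀ (List.ofFn l) N := by
  induction d with
  | zero =>
    intro k₀ l M N hM
    rw [Fin.sum_univ_one] at hM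
    have hTs : Ts k₀ (List.ofFn l) N
        = ∑ u ∈ Icc 1 (k₀ + l 0 + 1), faulhaberB u (k₀ + l 0) * (N : ℚ) ^ u := by
      simp [List.ofFn_succ, Ts]
    rw [hTs]
    unfold RHSsum
    refine Finset.sum_nbij' (fun K => K 0) (fun u => fun _ => u) ?_ ?_ ?_ ?_ ?_
    · intro K hK
      simp only [mem_filter, Fintype.mem_piFinset, mem_Icc] at hK ⊢
      exact ⟨hK.2.1 0, hK.2.2.1 0 rfl⟩
    · intro u hu
      simp only [mem_Icc] at hu
      simp only [mem_filter, Fintype.mem_piFinset, mem_Icc]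
      refine ⟨fun j => ⟨hu.1, by omega⟩, fun j => hu.1, fun j hj => ?_, fun j₁ j₂ h => ?_⟩
      · have : j = 0 := Fin.ext (by simp [hj])
        subst this; omega
      · have h₁ := j₁.isLt; have h₂ := j₂.isLt; omega
    · intro K hK
      funext j
      have : j = 0 := Fin.ext (by have := j.isLt; omega)
      subst this; rfl
    · intro u hu; rfl
    · intro K hK
      rw [Fin.prod_univ_one]
      rfl
  | succ d ih =>
    intro k₀ l M N hM
    have hsum : (∑ i, l i) = l 0 + ∑ i : Fin (d + 1), l i.succ := Fin.sum_univ_succ l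
    have hTs : Ts k₀ (List.ofFn l) N
        = ∑ u ∈ Icc 1 (k₀ + l 0 + 1), faulhaberB u (k₀ + l 0)
            * Ts u (List.ofFn fun i : Fin (d + 1) => l i.succ) N := by
      rw [List.ofFn_succ]; rfl
    rw [hTs]
    have key : RHSsum (d + 1) k₀ M N l
        = ∑ p ∈ (Icc 1 (k₀ + l 0 + 1)).sigma (fun k₁ =>
            (Fintype.piFinset fun _ : Fin (d + 1) => Finset.Icc 1 M).filter
              (fun K => (∀ j : Fin (d + 1), 1 ≤ K j) ∧
                (∀ j : Fin (d + 1), (j : ℕ) = 0 → K j ≤ k₁ + (fun i : Fin (d+1) => l i.succ) j + 1) ∧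
                (∀ j₁ j₂ : Fin (d + 1), (j₁ : ℕ) + 1 = (j₂ : ℕ) →
                  K j₂ ≤ K j₁ + (fun i : Fin (d+1) => l i.succ) j₂ + 1))),
          faulhaberB p.1 (k₀ + l 0) *
            ((∏ j : Fin (d + 1), faulhaberB (p.2 j)
              ((if (j : ℕ) = 0 then p.1
                else p.2 ⟨(j : ℕ) - 1, lt_of_le_of_lt (Nat.sub_le _ _) j.isLt⟩) + l j.succ)) *
            (N : ℚ) ^ (p.2 (Fin.last d))) := by
      unfold RHSsum
      refine (Finset.sum_nbij' (fun p => Fin.cons p.1 p.2) (fun K => ⟨K 0, Fin.tail K⟩)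
        ?_ ?_ ?_ ?_ ?_).symm
      · -- forward membership
        rintro ⟨k₁, K'⟩ hp
        simp only [mem_sigma, mem_filter, Fintype.mem_piFinset, mem_Icc] at hp ⊢
        obtain ⟨hk₁, hbox, h1, h2, h3⟩ := hp
        refine ⟨fun j => ?_, fun j => ?_, fun j hj => ?_, fun j₁ j₂ h => ?_⟩
        · refine Fin.cases ?_ (fun j' => ?_) j
          · rw [Fin.cons_zero]; omega
          · rw [Fin.cons_succ]; exact hbox j'
        · refine Fin.cases ?_ (fun j' => ?_) j
          · rw [Fin.cons_zero]; omega
          · rw [Fin.cons_succ]; exact h1 j'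
        · have : j = 0 := Fin.ext (by simp [hj])
          subst this
          rw [Fin.cons_zero]; omega
        · revert h
          refine Fin.cases ?_ (fun j₂' => ?_) j₂ <;> intro h
          · rw [Fin.val_zero] at h; omega
          · rw [Fin.cons_succ]
            revert h
            refine Fin.cases ?_ (fun j₁' => ?_) j₁ <;> intro h
            · have hz : j₂' = 0 := by
                apply Fin.ext
                rw [Fin.val_zero] at h ⊢
                rw [Fin.val_succ] at h
                omega
              subst hz
              rw [Fin.cons_zero]
              exact h2 0 (by simp)
            · rw [Fin.cons_succ]
              refine h3 j₁' j₂' ?_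
              rw [Fin.val_succ, Fin.val_succ] at h
              omega
      · -- backward membership
        intro K hK
        simp only [mem_filter, Fintype.mem_piFinset, mem_Icc] at hK
        obtain ⟨hbox, h1, h2, h3⟩ := hK
        simp only [mem_sigma, mem_filter, Fintype.mem_piFinset, mem_Icc]
        refine ⟨⟨h1 0, h2 0 (by simp)⟩, fun j => hbox _, fun j => h1 _, fun j hj => ?_,
          fun j₁ j₂ h => ?_⟩
        · have : j = 0 := Fin.ext (by simp [hj])
          subst this
          exact h3 0 ((0 : Fin (d + 1)).succ) (by simp)
        · exact h3 j₁.succ j₂.succ (by simp only [Fin.val_succ]; omega)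
      · rintro ⟨k₁, K'⟩ hp
        simp only [Fin.cons_zero, Fin.tail_cons]
      · intro K hK
        exact Fin.cons_self_tail K
      · -- summand equality
        rintro ⟨k₁, K'⟩ hp
        dsimp only
        conv_rhs => rw [Fin.prod_univ_succ]
        have h0 : faulhaberB (Fin.cons (α := fun _ => ℕ) k₁ K' 0)
            ((if ((0 : Fin (d + 2)) : ℕ) = 0 then k₀
              else Fin.cons (α := fun _ => ℕ) k₁ K'
                ⟨((0 : Fin (d + 2)) : ℕ) - 1,
                  lt_of_le_of_lt (Nat.sub_le _ _) (0 : Fin (d + 2)).isLt⟩) + l 0)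
            = faulhaberB k₁ (k₀ + l 0) := by
          rw [Fin.cons_zero, if_pos (by simp)]
        have hfac : ∀ j : Fin (d + 1),
            faulhaberB (Fin.cons (α := fun _ => ℕ) k₁ K' j.succ)
              ((if ((j.succ : Fin (d + 2)) : ℕ) = 0 then k₀
                else Fin.cons (α := fun _ => ℕ) k₁ K'
                  ⟨((j.succ : Fin (d + 2)) : ℕ) - 1,
                    lt_of_le_of_lt (Nat.sub_le _ _) (j.succ : Fin (d + 2)).isLt⟩) + l j.succ)
            = faulhaberB (K' j)
              ((if (j : ℕ) = 0 then k₁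
                else K' ⟨(j : ℕ) - 1, lt_of_le_of_lt (Nat.sub_le _ _) j.isLt⟩) + l j.succ) := by
          intro j
          rw [Fin.cons_succ]
          congr 2
          rw [if_neg (by simp), cons_mk_eq]
          by_cases hj : (j : ℕ) = 0
          · rw [if_pos (by simp [Fin.val_succ, hj]), if_pos hj]
          · rw [if_neg (by simp only [Fin.val_succ]; omega), if_neg hj]
            congr 1
        rw [h0, Finset.prod_congr rfl fun j _ => hfac j]
        have hlast : Fin.cons (α := fun _ => ℕ) k₁ K' (Fin.last (d + 1)) = K' (Fin.last d) := by
          rw [← Fin.succ_last]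
          exact Fin.cons_succ (α := fun _ => ℕ) k₁ K' (Fin.last d)
        rw [hlast]
        ring
    rw [key, Finset.sum_sigma]
    refine Finset.sum_congr rfl fun k₁ hk₁ => ?_
    simp only [mem_Icc] at hk₁
    dsimp only
    rw [← Finset.mul_sum]
    congr 1
    have hsum2 : (∑ i : Fin (d + 1), (fun i : Fin (d + 1) => l i.succ) i)
        = ∑ i : Fin (d + 1), l i.succ := rfl
    have := ih k₁ (fun i => l i.succ) M N (by omega)
    rw [← this]
    rfl


/-- Multiple Faulhaber formula: for `l_1,…,l_d ≥ 1` and any `N ≥ 0`,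
`∑_{0 ≤ n_1 < ⋯ < n_d < N} n_1^{l_1}⋯n_d^{l_d}
 = ∑_{(k_1,…,k_d), 1 ≤ k_1 ≤ l_1+1, 1 ≤ k_{j} ≤ k_{j−1}+l_j+1}
   𝔹_{k_1}^{l_1}·𝔹_{k_2}^{k_1+l_2}⋯𝔹_{k_d}^{k_{d−1}+l_d}·N^{k_d}`
(the tuples `k` automatically satisfy `k_j ≤ l_1+⋯+l_d+d`, so the right-hand index set is the
corresponding filtered finite set). -/
theorem multiple_faulhaber (d : ℕ) (hd : 1 ≤ d) (l : Fin d → ℕ) (hl : ∀ i, 1 ≤ l i) (N : ℕ) :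
    (∑ n ∈ (Fintype.piFinset fun _ : Fin d => Finset.range N).filter
        (fun n => ∀ i j : Fin d, i < j → n i < n j),
      ∏ i, (n i : ℚ) ^ (l i))
    = ∑ K ∈ (Fintype.piFinset fun _ : Fin d => Finset.Icc 1 (∑ i, l i + d)).filter
        (fun K => (∀ j : Fin d, 1 ≤ K j) ∧
          (∀ j : Fin d, (j : ℕ) = 0 → K j ≤ l j + 1) ∧
          (∀ j₁ j₂ : Fin d, (j₁ : ℕ) + 1 = (j₂ : ℕ) → K j₂ ≤ K j₁ + l j₂ + 1)),
      (∏ j : Fin d, faulhaberB (K j)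
          ((if (j : ℕ) = 0 then 0 else K ⟨(j : ℕ) - 1, by have := j.isLt; omega⟩) + l j)) *
        (N : ℚ) ^ (K ⟨d - 1, by omega⟩) := by
  obtain ⟨d', rfl⟩ : ∃ d', d = d' + 1 := ⟨d - 1, by omega⟩
  rw [lhs_eq, Hs_reverse, ← rhs_eq d' 0 l (∑ i, l i + (d' + 1)) N (by omega)]
  unfold RHSsum
  refine Finset.sum_congr (Finset.filter_congr fun K _ => ?_) (fun K _ => rfl)
  constructor <;> rintro ⟨h1, h2, h3⟩ <;>
    exact ⟨h1, fun j hj => by have := h2 j hj; omega, h3⟩
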